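/- Let f₀,f₁,f₂,f₃,f₄,f₅ ∈ ℂ satisfy (f₀+f₁)(f₂+f₃)(f₄+f₅) = (f₁+f₂)(f₃+f₄)(f₅+f₀), and assume f₀ ≠ f₂, f₁ ≠ f₃, f₂ ≠ f₄, f₃ ≠ f₅. Then (f₁+f₂)/((f₀−f₂)(f₁−f₃)) + (f₃+f₄)/((f₂−f₄)(f₃−f₅)) + (f₂+f₃)/((f₂−f₄)(f₁−f₃)) = 0. -/

import Mathlib

/-- Entry 21 of the projector identity `P₀ + P₂ + P₄ = I`. -/
theorem projector_identity_entry21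
    (f₀ f₁ f₂ f₃ f₄ f₅ : ℂ)
    (hMR : (f₀ + f₁) * (f₂ + f₃) * (f₄ + f₅) = (f₁ + f₂) * (f₃ + f₄) * (f₅ + f₀))
    (h02 : f₀ ≠ f₂) (h13 : f₁ ≠ f₃) (h24 : f₂ ≠ f₄) (h35 : f₃ ≠ f₅) :
    (f₁ + f₂) / ((f₀ - f₂) * (f₁ - f₃))
      + (f₃ + f₄) / ((f₂ - f₄) * (f₃ - f₅))
      + (f₂ + f₃) / ((f₂ - f₄) * (f₁ - f₃)) = 0 := by
  have a : f₀ - f₂ ≠ 0 := sub_ne_zero.mpr h02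
  have b : f₁ - f₃ ≠ 0 := sub_ne_zero.mpr h13
  have c : f₂ - f₄ ≠ 0 := sub_ne_zero.mpr h24
  have d : f₃ - f₅ ≠ 0 := sub_ne_zero.mpr h35
  have key : (f₁ + f₂) * ((f₂ - f₄) * (f₃ - f₅))
      + (f₃ + f₄) * ((f₀ - f₂) * (f₁ - f₃))
      + (f₂ + f₃) * ((f₀ - f₂) * (f₃ - f₅)) = 0 := by
    linear_combination -hMR
  field_simp
  linear_combination key
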